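/- arXiv:1103.1662 — 3 statements merged into one kernel-verified Lean document; each statement's English description precedes it below -/
import Mathlib

section
/- Let n ≥ 2 and let D_1, ..., D_n be pairwise coprime integers with each D_i ≥ n+2. Set δ = (1/2 - 1/(n+1) - 1/2 · max_i(1/D_i)) / (D_1·...·D_n). Then every velocity vector (v_1, ..., v_n) with |v_i - 1/D_i| < δ for all i satisfies the Lonely Runner Conjecture: there exists t > 0 with ‖t·v_i‖ ≥ 1/(n+1) for all i. -/
/-- Distance from a real number to the nearest integer. -/
noncomputable def distNearestInt (x : ℝ) : ℝ := |x - round x|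

lemma half_dist_le_distNearestInt (x : ℝ) (q : ℤ) :
    1 / 2 - |x - ((q : ℝ) + 1 / 2)| ≤ distNearestInt x := by
  unfold distNearestInt
  have hne : (2 * q + 1 - 2 * round x : ℤ) ≠ 0 := by omega
  have h1 : (1 : ℝ) ≤ |((2 * q + 1 - 2 * round x : ℤ) : ℝ)| := by
    rw [← Int.cast_abs]
    exact_mod_cast Int.one_le_abs hne
  have h2 : |((2 * q + 1 - 2 * round x : ℤ) : ℝ)| = 2 * |(q : ℝ) + 1 / 2 - round x| := by
    have he : ((2 * q + 1 - 2 * round x : ℤ) : ℝ) = 2 * ((q : ℝ) + 1 / 2 - round x) := by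
      push_cast; ring
    rw [he, abs_mul, abs_two]
  have h3 : (1 : ℝ) / 2 ≤ |(q : ℝ) + 1 / 2 - round x| := by
    rw [h2] at h1; linarith
  have h4 : |(q : ℝ) + 1 / 2 - round x| ≤ |(q : ℝ) + 1 / 2 - x| + |x - round x| := by
    calc |(q : ℝ) + 1 / 2 - round x| = |((q : ℝ) + 1 / 2 - x) + (x - round x)| := by ring_nf
    _ ≤ _ := abs_add_le _ _
  have h5 : |(q : ℝ) + 1 / 2 - x| = |x - ((q : ℝ) + 1 / 2)| := abs_sub_comm _ _
  linarith

theorem lonely_runner_open_box (n : ℕ) (hn : 2 ≤ n) (D : Fin n → ℕ)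
    (hcop : ∀ i j, i ≠ j → Nat.Coprime (D i) (D j)) (hD : ∀ i, n + 2 ≤ D i)
    (δ : ℝ)
    (hδ : δ = (1 / 2 - 1 / (n + 1) -
        (1 / 2) * ((Finset.univ : Finset (Fin n)).sup'
          ⟨⟨0, by omega⟩, Finset.mem_univ _⟩ fun i => (1 : ℝ) / (D i))) /
        ∏ i, (D i : ℝ))
    (v : Fin n → ℝ) (hv : ∀ i, |v i - 1 / (D i : ℝ)| < δ) :
    ∃ t : ℝ, 0 < t ∧ ∀ i, (1 : ℝ) / (n + 1) ≤ distNearestInt (t * v i) := by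
  have hne : (Finset.univ : Finset (Fin n)).Nonempty := ⟨⟨0, by omega⟩, Finset.mem_univ _⟩
  set M : ℝ := (Finset.univ : Finset (Fin n)).sup' hne fun i => (1 : ℝ) / (D i) with hM
  have hDpos : ∀ i, 0 < (D i : ℝ) := fun i => by
    have : 0 < D i := by have := hD i; omega
    exact_mod_cast this
  have hMle : M ≤ 1 / (n + 2 : ℝ) := by
    apply Finset.sup'_le
    intro i _
    apply one_div_le_one_div_of_le (by positivity)
    exact_mod_cast hD i
  have hMge : ∀ i, (1 : ℝ) / (D i) ≤ M := fun i =>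
    Finset.le_sup' (fun j => (1 : ℝ) / (D j)) (Finset.mem_univ i)
  have hnR : (2 : ℝ) ≤ (n : ℝ) := by exact_mod_cast hn
  have hnum_pos : 0 < 1 / 2 - 1 / ((n : ℝ) + 1) - (1 / 2) * M := by
    have h1 : 1 / ((n : ℝ) + 1) ≤ 1 / 3 := by
      apply one_div_le_one_div_of_le <;> linarith
    have h2 : M ≤ 1 / 4 := le_trans hMle (by
      apply one_div_le_one_div_of_le <;> linarith)
    linarith
  have hPpos : (0 : ℝ) < ∏ i, (D i : ℝ) := Finset.prod_pos fun i _ => hDpos i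
  have hδpos : 0 < δ := by rw [hδ]; positivity
  -- Chinese remainder setup
  have hDne : ∀ i ∈ (Finset.univ : Finset (Fin n)), D i ≠ 0 := fun i _ => by
    have := hD i; omega
  have hpp : Set.Pairwise ((Finset.univ : Finset (Fin n)) : Set (Fin n))
      (Function.onFun Nat.Coprime D) := fun i _ j _ hij => hcop i j hij
  obtain ⟨T0, hT0⟩ := Nat.chineseRemainderOfFinset (fun i => D i / 2) D Finset.univ hDne hpp
  set P : ℕ := ∏ i, D i with hP
  have hPposN : 0 < P := Finset.prod_pos fun i _ => by have := hD i; omega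
  set T : ℕ := T0 % P with hTdef
  have hTlt : T < P := Nat.mod_lt _ hPposN
  have hamod : ∀ i, T % D i = D i / 2 := by
    intro i
    have hdvd : D i ∣ P := Finset.dvd_prod_of_mem D (Finset.mem_univ i)
    have h := hT0 i (Finset.mem_univ i)
    have hlt : D i / 2 < D i := Nat.div_lt_self (by have := hD i; omega) one_lt_two
    rw [hTdef, Nat.mod_mod_of_dvd _ hdvd]
    have : D i / 2 % D i = D i / 2 := Nat.mod_eq_of_lt hlt
    rwa [Nat.ModEq, this] at h
  have hTpos : 0 < T := by
    rcases Nat.eq_zero_or_pos T with h | h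
    · exfalso
      have := hamod ⟨0, by omega⟩
      have hD0 := hD ⟨0, by omega⟩
      rw [h] at this
      simp at this
      omega
    · exact h
  refine ⟨(T : ℝ), by exact_mod_cast hTpos, fun i => ?_⟩
  have hDi := hDpos i
  set q : ℕ := T / D i with hq
  have hTdecomp : T = D i * q + D i / 2 := by
    rw [hq, ← hamod i]
    exact (Nat.div_add_mod T (D i)).symm
  have hTR : (T : ℝ) = (D i : ℝ) * q + (D i / 2 : ℕ) := by exact_mod_cast congrArg (Nat.cast : ℕ → ℝ) hTdecomp
  have h2a : D i - 1 ≤ 2 * (D i / 2) ∧ 2 * (D i / 2) ≤ D i := by omega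
  have hA : ((D i : ℝ)) ≤ 2 * ((D i / 2 : ℕ) : ℝ) + 1 := by
    have h' : D i ≤ 2 * (D i / 2) + 1 := by omega
    exact_mod_cast h'
  have hB : (2 : ℝ) * ((D i / 2 : ℕ) : ℝ) ≤ (D i : ℝ) := by exact_mod_cast h2a.2
  have hfrac : |((D i / 2 : ℕ) : ℝ) / (D i) - 1 / 2| ≤ 1 / (2 * D i) := by
    have heq : ((D i / 2 : ℕ) : ℝ) / (D i) - 1 / 2 = (2 * ((D i / 2 : ℕ) : ℝ) - D i) / (2 * D i) := by
      field_simp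
    have habs : |2 * ((D i / 2 : ℕ) : ℝ) - D i| ≤ 1 := abs_le.mpr ⟨by linarith, by linarith⟩
    rw [heq, abs_div, abs_of_pos (show (0 : ℝ) < 2 * D i by positivity)]
    gcongr
  have hTleP : (T : ℝ) ≤ ∏ j, (D j : ℝ) := by
    have h1 : (T : ℝ) ≤ (P : ℝ) := by exact_mod_cast le_of_lt hTlt
    have h2 : (P : ℝ) = ∏ j, (D j : ℝ) := by rw [hP]; push_cast; ring
    linarith
  have hpert : (T : ℝ) * |v i - 1 / (D i : ℝ)| ≤ (∏ j, (D j : ℝ)) * δ := by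
    have h1 : (T : ℝ) * |v i - 1 / (D i : ℝ)| ≤ (T : ℝ) * δ :=
      mul_le_mul_of_nonneg_left (le_of_lt (hv i)) (Nat.cast_nonneg T)
    have h2 : (T : ℝ) * δ ≤ (∏ j, (D j : ℝ)) * δ :=
      mul_le_mul_of_nonneg_right hTleP (le_of_lt hδpos)
    linarith
  have hPδ : (∏ j, (D j : ℝ)) * δ = 1 / 2 - 1 / ((n : ℝ) + 1) - (1 / 2) * M := by
    rw [hδ]
    field_simp
  have hexp : (T : ℝ) * v i - (((q : ℤ) : ℝ) + 1 / 2) =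
      (((D i / 2 : ℕ) : ℝ) / D i - 1 / 2) + (T : ℝ) * (v i - 1 / (D i : ℝ)) := by
    have h0 : (T : ℝ) * (1 / (D i : ℝ)) = (q : ℝ) + ((D i / 2 : ℕ) : ℝ) / D i := by
      rw [hTR]; field_simp
    push_cast
    linear_combination h0
  have hkey : |(T : ℝ) * v i - (((q : ℤ) : ℝ) + 1 / 2)| ≤
      1 / (2 * D i) + (1 / 2 - 1 / ((n : ℝ) + 1) - (1 / 2) * M) := by
    rw [hexp]
    calc |(((D i / 2 : ℕ) : ℝ) / D i - 1 / 2) + (T : ℝ) * (v i - 1 / (D i : ℝ))|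
        ≤ |((D i / 2 : ℕ) : ℝ) / D i - 1 / 2| + |(T : ℝ) * (v i - 1 / (D i : ℝ))| := abs_add_le _ _
      _ ≤ 1 / (2 * D i) + (1 / 2 - 1 / ((n : ℝ) + 1) - (1 / 2) * M) := by
          rw [abs_mul, abs_of_nonneg (show (0:ℝ) ≤ (T:ℝ) from Nat.cast_nonneg T)]
          have hp := hpert
          rw [hPδ] at hp
          linarith
  have hhalf := half_dist_le_distNearestInt ((T : ℝ) * v i) (q : ℤ)
  have hMi : (1 : ℝ) / (2 * D i) ≤ (1 / 2) * M := by
    have h := hMge i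
    have heq : (1 : ℝ) / (2 * D i) = (1 / 2) * (1 / D i) := by
      rw [one_div, mul_inv]; ring
    rw [heq]; linarith
  linarith
end

section
/- The set of velocity vectors in (0,∞)^n satisfying the Lonely Runner Conjecture (with the strict property that there exists t with ‖t·v_i‖ ≥ 1/(n+1) for all i) contains an open neighborhood of every point (1/D_1, ..., 1/D_n) with D_1,...,D_n pairwise coprime integers all at least n+2. -/
lemma distNearestInt_lipschitz : LipschitzWith 1 distNearestInt := by
  apply LipschitzWith.of_dist_le_mul
  intro x y
  rw [Real.dist_eq, Real.dist_eq, NNReal.coe_one, one_mul, abs_sub_le_iff]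
  constructor
  · calc distNearestInt x - distNearestInt y ≤ |x - (round y : ℝ)| - |y - round y| := by
          unfold distNearestInt; have := round_le x (round y); linarith
      _ ≤ |x - y| := by
          have := abs_sub_abs_le_abs_sub (x - (round y : ℝ)) (y - round y)
          simpa using this
  · calc distNearestInt y - distNearestInt x ≤ |y - (round x : ℝ)| - |x - round x| := by
          unfold distNearestInt; have := round_le y (round x); linarith
      _ ≤ |y - x| := by
          have := abs_sub_abs_le_abs_sub (y - (round x : ℝ)) (x - round x)
          simpa [abs_sub_comm] using this
      _ = |x - y| := abs_sub_comm y x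

lemma distNearestInt_continuous : Continuous distNearestInt :=
  distNearestInt_lipschitz.continuous

theorem lonely_runner_open_nbhd (n : ℕ) (hn : 2 ≤ n) (D : Fin n → ℕ)
    (hcop : ∀ i j, i ≠ j → Nat.Coprime (D i) (D j)) (hD : ∀ i, n + 2 ≤ D i) :
    ∃ U : Set (Fin n → ℝ), IsOpen U ∧ (fun i => (1 : ℝ) / (D i)) ∈ U ∧
      U ⊆ {v : Fin n → ℝ |
        ∃ t : ℝ, 0 < t ∧ ∀ i, (1 : ℝ) / (n + 1) ≤ distNearestInt (t * v i)} := by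
  have hcop' : Pairwise (Function.onFun Nat.Coprime D) := fun i j h => hcop i j h
  set N : ℕ := ∏ i, D i with hN
  have hDpos : ∀ i, 0 < D i := fun i => lt_of_lt_of_le (by omega) (hD i)
  have hNpos : 0 < N := Finset.prod_pos (fun i _ => hDpos i)
  -- CRT element
  let e := ZMod.prodEquivPi D hcop'
  let x : ZMod N := e.symm (fun i => ((D i / 2 : ℕ) : ZMod (D i)))
  set T : ℕ := x.val + N with hT
  have hTpos : 0 < T := by positivity
  -- T mod D i = D i / 2
  have hmod : ∀ i, T % D i = D i / 2 := by
    intro i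
    have hdvd : D i ∣ N := Finset.dvd_prod_of_mem D (Finset.mem_univ i)
    have h1 : (ZMod.castHom hdvd (ZMod (D i))) x = ((D i / 2 : ℕ) : ZMod (D i)) := by
      have : (Pi.evalRingHom (fun i => ZMod (D i)) i).comp
          ((e : ZMod N ≃+* Π i, ZMod (D i)) : ZMod N →+* Π i, ZMod (D i))
          = ZMod.castHom hdvd (ZMod (D i)) := Subsingleton.elim _ _
      have h2 : (e x) i = ZMod.castHom hdvd (ZMod (D i)) x := by
        rw [← this]; rfl
      rw [← h2]
      show (e (e.symm _)) i = _
      rw [e.apply_symm_apply]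
    haveI : NeZero N := ⟨hNpos.ne'⟩
    have h3 : ((x.val : ℕ) : ZMod (D i)) = ((D i / 2 : ℕ) : ZMod (D i)) := by
      rw [ZMod.natCast_val, ← ZMod.castHom_apply (h := hdvd)]
      exact h1
    have h4 : x.val % D i = (D i / 2) % D i :=
      (ZMod.natCast_eq_natCast_iff _ _ _).mp h3
    have h6 : D i / 2 < D i := Nat.div_lt_self (hDpos i) one_lt_two
    obtain ⟨k, hk⟩ := hdvd
    calc T % D i = (x.val + D i * k) % D i := by rw [hT]; congr 1; omega
      _ = x.val % D i := Nat.add_mul_mod_self_left _ _ _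
      _ = (D i / 2) % D i := h4
      _ = D i / 2 := Nat.mod_eq_of_lt h6
  -- the key bound at the center, strict
  have hkey : ∀ i, (1 : ℝ) / (n + 1) < distNearestInt ((T : ℝ) * ((1 : ℝ) / (D i))) := by
    intro i
    have hDi : (n : ℝ) + 2 ≤ (D i : ℝ) := by exact_mod_cast hD i
    have hDipos : (0 : ℝ) < D i := by exact_mod_cast hDpos i
    set r : ℕ := D i / 2 with hr
    set q : ℕ := T / D i with hq
    have hTdecomp : T = D i * q + r := by
      rw [hr, hq, ← hmod i]; exact (Nat.div_add_mod T (D i)).symm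
    have hcast : (T : ℝ) = (D i : ℝ) * q + r := by exact_mod_cast hTdecomp
    have hval : (T : ℝ) * ((1 : ℝ) / (D i)) = (q : ℕ) + (r : ℝ) / (D i) := by
      rw [mul_one_div, hcast]
      field_simp
    have hr1 : (r : ℝ) / D i < 1 := by
      rw [div_lt_one hDipos]
      exact_mod_cast Nat.div_lt_self (hDpos i) one_lt_two
    have hr0 : (0 : ℝ) ≤ (r : ℝ) / D i := by positivity
    have hfract : Int.fract ((T : ℝ) * ((1 : ℝ) / (D i))) = (r : ℝ) / D i := by
      rw [hval, Int.fract_natCast_add, Int.fract_eq_self.mpr ⟨hr0, hr1⟩]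
    have hmin : distNearestInt ((T : ℝ) * ((1 : ℝ) / (D i)))
        = min ((r : ℝ) / D i) (1 - (r : ℝ) / D i) := by
      unfold distNearestInt
      rw [abs_sub_round_eq_min, hfract]
    rw [hmin, lt_min_iff]
    have hn1 : (0 : ℝ) < (n : ℝ) + 1 := by positivity
    have hrlb : ((D i : ℝ) - 1) / 2 ≤ (r : ℝ) := by
      have : D i ≤ 2 * r + 1 := by omega
      have : (D i : ℝ) ≤ 2 * r + 1 := by exact_mod_cast this
      linarith
    have hrub : (r : ℝ) ≤ (D i : ℝ) / 2 := by
      have : 2 * r ≤ D i := by omega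
      have : (2 : ℝ) * r ≤ D i := by exact_mod_cast this
      linarith
    have hnn : (2 : ℝ) ≤ (n : ℝ) := by exact_mod_cast hn
    constructor
    · rw [div_lt_div_iff₀ hn1 hDipos]
      -- 1 * D i < r * (n+1); r ≥ (D i - 1)/2, D i ≥ n+2
      nlinarith
    · have : (r : ℝ) / D i ≤ 1 / 2 := by
        rw [div_le_div_iff₀ hDipos (by norm_num)]; linarith
      have h12 : (1 : ℝ) / (n + 1) < 1 / 2 := by
        rw [div_lt_div_iff₀ hn1 (by norm_num)]; linarith
      linarith
  -- define U
  refine ⟨⋂ i, (fun v : Fin n → ℝ => distNearestInt ((T : ℝ) * v i)) ⁻¹' Set.Ioi ((1:ℝ)/(n+1)),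
    ?_, ?_, ?_⟩
  · apply isOpen_iInter_of_finite
    intro i
    exact IsOpen.preimage
      (distNearestInt_continuous.comp (continuous_const.mul (continuous_apply i)))
      isOpen_Ioi
  · simp only [Set.mem_iInter, Set.mem_preimage, Set.mem_Ioi]
    exact hkey
  · intro v hv
    simp only [Set.mem_iInter, Set.mem_preimage, Set.mem_Ioi] at hv
    exact ⟨(T : ℝ), by exact_mod_cast hTpos, fun i => (hv i).le⟩
end

section
/- If the Lonely Runner Conjecture fails for some rational velocity vector P ∈ ℚ^n in the strong sense that sup_{t>0} min_i ‖t·p_i‖ < 1/(n+1), then on any segment from P to a ℚ-linearly independent vector A there exists a vector B with sup_{t∈[0,T_1]} min_i ‖t·b_i‖ = 1/(n+1), where T_1 is a time witnessing min_i ‖T_1·a_i‖ > 1/(n+1) for A. -/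
lemma distNearestInt_nonneg (x : ℝ) : 0 ≤ distNearestInt x := abs_nonneg _

lemma distNearestInt_le_half (x : ℝ) : distNearestInt x ≤ 1 / 2 := abs_sub_round x

lemma distNearestInt_zero : distNearestInt 0 = 0 := by simp [distNearestInt]

lemma abs_distNearestInt_sub (x y : ℝ) :
    |distNearestInt x - distNearestInt y| ≤ |x - y| := by
  have key : ∀ a b : ℝ, distNearestInt a ≤ distNearestInt b + |a - b| := by
    intro a b
    have h1 : distNearestInt a ≤ |a - round b| := round_le a (round b)
    have h2 : |a - (round b : ℝ)| ≤ |a - b| + |b - round b| := by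
      have := abs_sub_le a b (round b : ℝ)
      linarith
    unfold distNearestInt at *
    linarith
  have h1 := key x y
  have h2 := key y x
  rw [abs_sub_comm y x] at h2
  rw [abs_sub_le_iff]
  constructor <;> linarith

theorem exact_point_on_segment (n : ℕ) (hn : 0 < n) (P : Fin n → ℚ)
    (hfail : (⨆ t : {t : ℝ // 0 < t}, ⨅ i, distNearestInt (↑t * (P i : ℝ)))
        < 1 / (n + 1))
    (A : Fin n → ℝ) (hA : LinearIndependent ℚ A)
    (T₁ : ℝ) (hT₁ : 0 < T₁)
    (hwit : (1 : ℝ) / (n + 1) < ⨅ i, distNearestInt (T₁ * A i)) :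
    ∃ s ∈ Set.Icc (0 : ℝ) 1,
      (⨆ t : Set.Icc (0 : ℝ) T₁,
        ⨅ i, distNearestInt (↑t * ((1 - s) • (fun i => (P i : ℝ)) + s • A) i))
        = 1 / (n + 1) := by
  haveI : Nonempty (Fin n) := ⟨⟨0, hn⟩⟩
  haveI : Nonempty (Set.Icc (0 : ℝ) T₁) := ⟨⟨0, le_refl 0, hT₁.le⟩⟩
  set v : ℝ → Fin n → ℝ :=
    fun s i => ((1 - s) • (fun i => (P i : ℝ)) + s • A) i with hv
  have hv' : ∀ s i, v s i = (1 - s) * (P i : ℝ) + s * A i := by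
    intro s i; simp [hv]
  set f : ℝ → ℝ → ℝ := fun s t => ⨅ i, distNearestInt (t * v s i) with hf
  set G : ℝ → ℝ := fun s => ⨆ t : Set.Icc (0 : ℝ) T₁, f s t with hG
  -- basic bounds
  have hf_nonneg : ∀ s t, 0 ≤ f s t := fun s t =>
    le_ciInf fun i => distNearestInt_nonneg _
  have hf_le_half : ∀ s t, f s t ≤ 1 / 2 := fun s t =>
    ciInf_le_of_le (Set.Finite.bddBelow (Set.finite_range _)) (Classical.arbitrary _)
      (distNearestInt_le_half _)
  have hbddG : ∀ s, BddAbove (Set.range fun t : Set.Icc (0 : ℝ) T₁ => f s t) :=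
    fun s => ⟨1 / 2, by rintro x ⟨t, rfl⟩; exact hf_le_half s t⟩
  -- Lipschitz constant
  set M : ℝ := ∑ i, |A i - (P i : ℝ)| with hM
  have hM0 : 0 ≤ M := by
    rw [hM]
    apply Finset.sum_nonneg
    intro i _
    exact abs_nonneg _
  have hMi : ∀ i, |A i - (P i : ℝ)| ≤ M := by
    intro i
    rw [hM]
    exact Finset.single_le_sum (f := fun j => |A j - (P j : ℝ)|)
      (fun j _ => abs_nonneg _) (Finset.mem_univ i)
  set C : ℝ := T₁ * M with hC
  have hC0 : 0 ≤ C := mul_nonneg hT₁.le hM0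
  -- key pointwise estimate
  have key : ∀ s s' : ℝ, ∀ t : Set.Icc (0 : ℝ) T₁,
      f s (t : ℝ) ≤ f s' (t : ℝ) + C * |s - s'| := by
    intro s s' t
    obtain ⟨i, hi⟩ := exists_eq_ciInf_of_finite
      (f := fun i => distNearestInt ((t : ℝ) * v s' i))
    have h1 : f s (t : ℝ) ≤ distNearestInt ((t : ℝ) * v s i) :=
      ciInf_le (Set.Finite.bddBelow (Set.finite_range _)) i
    have h2 : distNearestInt ((t : ℝ) * v s i) ≤
        distNearestInt ((t : ℝ) * v s' i) + |(t : ℝ) * v s i - (t : ℝ) * v s' i| := by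
      have := abs_distNearestInt_sub ((t : ℝ) * v s i) ((t : ℝ) * v s' i)
      have := abs_le.mp this
      linarith [this.1, this.2]
    have h3 : |(t : ℝ) * v s i - (t : ℝ) * v s' i| ≤ C * |s - s'| := by
      have hdiff : (t : ℝ) * v s i - (t : ℝ) * v s' i
          = (t : ℝ) * ((s - s') * (A i - (P i : ℝ))) := by
        rw [hv' s i, hv' s' i]; ring
      rw [hdiff, abs_mul, abs_mul]
      have ht0 : 0 ≤ (t : ℝ) := t.2.1
      have htT : (t : ℝ) ≤ T₁ := t.2.2
      have habs_t : |(t : ℝ)| ≤ T₁ := by rwa [abs_of_nonneg ht0]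
      calc |(t : ℝ)| * (|s - s'| * |A i - (P i : ℝ)|)
          ≤ T₁ * (|s - s'| * M) := by
            apply mul_le_mul habs_t _ (mul_nonneg (abs_nonneg _) (abs_nonneg _)) hT₁.le
            exact mul_le_mul_of_nonneg_left (hMi i) (abs_nonneg _)
        _ = C * |s - s'| := by rw [hC]; ring
    calc f s (t : ℝ) ≤ distNearestInt ((t : ℝ) * v s i) := h1
      _ ≤ distNearestInt ((t : ℝ) * v s' i) + C * |s - s'| := by linarith
      _ = f s' (t : ℝ) + C * |s - s'| := by rw [hi]
  -- G is Lipschitz, hence continuous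
  have hGlip : ∀ s s' : ℝ, G s ≤ G s' + C * |s - s'| := by
    intro s s'
    apply ciSup_le
    intro t
    calc f s (t : ℝ) ≤ f s' (t : ℝ) + C * |s - s'| := key s s' t
      _ ≤ G s' + C * |s - s'| := by
          have := le_ciSup (hbddG s') t
          linarith
  have hGcont : Continuous G := by
    apply LipschitzWith.continuous (K := Real.toNNReal C)
    apply LipschitzWith.of_dist_le_mul
    intro x y
    rw [Real.dist_eq, Real.dist_eq, Real.coe_toNNReal C hC0, abs_sub_le_iff]
    have h1 := hGlip x y
    have h2 := hGlip y x
    rw [abs_sub_comm] at h2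
    constructor <;> linarith
  -- endpoint values
  set S : ℝ := ⨆ t : {t : ℝ // 0 < t}, ⨅ i, distNearestInt (↑t * (P i : ℝ)) with hS
  have hbddS : BddAbove (Set.range fun t : {t : ℝ // 0 < t} =>
      ⨅ i, distNearestInt ((t : ℝ) * (P i : ℝ))) := by
    refine ⟨1 / 2, ?_⟩
    rintro x ⟨t, rfl⟩
    exact ciInf_le_of_le (Set.Finite.bddBelow (Set.finite_range _)) (Classical.arbitrary _)
      (distNearestInt_le_half _)
  have hS0 : 0 ≤ S := by
    refine le_trans ?_ (le_ciSup hbddS ⟨1, one_pos⟩)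
    exact le_ciInf fun i => distNearestInt_nonneg _
  have hG0 : G 0 ≤ S := by
    apply ciSup_le
    intro t
    rcases eq_or_lt_of_le t.2.1 with h0 | h0
    · have : f 0 (t : ℝ) = 0 := by
        simp only [hf, ← h0]
        have : ∀ i, distNearestInt ((0:ℝ) * v 0 i) = 0 := by
          intro i; rw [zero_mul, distNearestInt_zero]
        simp only [this, ciInf_const]
      rw [this]; exact hS0
    · have heq : f 0 (t : ℝ) = ⨅ i, distNearestInt ((t : ℝ) * (P i : ℝ)) := by
        have hfun : (fun i => distNearestInt ((t : ℝ) * v 0 i))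
            = fun i => distNearestInt ((t : ℝ) * (P i : ℝ)) := by
          funext i; rw [hv' 0 i]; norm_num
        show (⨅ i, distNearestInt ((t : ℝ) * v 0 i)) = _
        rw [hfun]
      rw [heq]
      exact le_ciSup hbddS ⟨(t : ℝ), h0⟩
  have hG1 : (⨅ i, distNearestInt (T₁ * A i)) ≤ G 1 := by
    have heq : f 1 T₁ = ⨅ i, distNearestInt (T₁ * A i) := by
      have hfun : (fun i => distNearestInt (T₁ * v 1 i))
          = fun i => distNearestInt (T₁ * A i) := by
        funext i; rw [hv' 1 i]; norm_num
      show (⨅ i, distNearestInt (T₁ * v 1 i)) = _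
      rw [hfun]
    calc (⨅ i, distNearestInt (T₁ * A i)) = f 1 T₁ := heq.symm
      _ ≤ G 1 := le_ciSup (hbddG 1) ⟨T₁, le_of_lt hT₁, le_refl T₁⟩
  -- intermediate value theorem
  have hmem : (1 : ℝ) / (n + 1) ∈ Set.Icc (G 0) (G 1) := by
    constructor
    · exact le_of_lt (lt_of_le_of_lt hG0 hfail)
    · exact le_of_lt (lt_of_lt_of_le hwit hG1)
  have := intermediate_value_Icc (zero_le_one) hGcont.continuousOn hmem
  obtain ⟨s, hs, hGs⟩ := this
  exact ⟨s, hs, hGs⟩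
end
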